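/- (BSC-bound for H_α^H.) Fix α > 0, α ≠ 1, and suppose that for every fixed y ∈ I_α^H the map x ↦ κ_α^H(x,y) is convex on I_α^H, and likewise in the second argument for every fixed first argument. Then: if α > 1, H_α^H(X_1+X_2|Y_1Y_2) ≤ h_α( h_α^{-1}(H_α^H(X_1|Y_1)) ∗ h_α^{-1}(H_α^H(X_2|Y_2)) ); and if α < 1, H_α^H(X_1+X_2|Y_1Y_2) ≥ h_α( h_α^{-1}(H_α^H(X_1|Y_1)) ∗ h_α^{-1}(H_α^H(X_2|Y_2)) ). If instead κ_α^H is concave in each argument, the two inequalities hold with ≤ and ≥ exchanged. -/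

import Mathlib

open Real

noncomputable section

/-- Binary convolution `a∗b = a(1-b) + (1-a)b`. -/
def bconv (a b : ℝ) : ℝ := a * (1 - b) + (1 - a) * b

/-- Binary Rényi entropy `h_α(p) = (1/(1-α))·log(p^α + (1-p)^α)`. -/
def binH (α p : ℝ) : ℝ := (1 / (1 - α)) * Real.log (p ^ α + (1 - p) ^ α)

/-- Inverse of `h_α` as a map `[0, log 2] → [0, 1/2]`. -/
def binHInv (α : ℝ) : ℝ → ℝ := Function.invFunOn (binH α) (Set.Icc 0 (1/2))

/-- `k_α^A(p) = (p^α + (1-p)^α)^{1/α}`. -/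
def kA (α p : ℝ) : ℝ := (p ^ α + (1 - p) ^ α) ^ (1/α)

/-- Inverse of `k_α^A`, mapping `I_α^A` back to `[0,1/2]`. -/
def kAInv (α : ℝ) : ℝ → ℝ := Function.invFunOn (kA α) (Set.Icc 0 (1/2))

/-- `δ_α^A = 2^{(1-α)/α}`. -/
def deltaA (α : ℝ) : ℝ := (2 : ℝ) ^ ((1 - α)/α)

/-- The closed interval `I_α^A` with endpoints `1` and `δ_α^A`. -/
def IA (α : ℝ) : Set ℝ := Set.uIcc 1 (deltaA α)

/-- `κ_α^A(x,y) = k_α^A((k_α^A)⁻¹(x) ∗ (k_α^A)⁻¹(y))`. -/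
def kkA (α x y : ℝ) : ℝ := kA α (bconv (kAInv α x) (kAInv α y))

/-- `k_α^H(p) = p^α + (1-p)^α`. -/
def kH (α p : ℝ) : ℝ := p ^ α + (1 - p) ^ α

/-- Inverse of `k_α^H`, mapping `I_α^H` back to `[0,1/2]`. -/
def kHInv (α : ℝ) : ℝ → ℝ := Function.invFunOn (kH α) (Set.Icc 0 (1/2))

/-- `δ_α^H = 2^{1-α}`. -/
def deltaH (α : ℝ) : ℝ := (2 : ℝ) ^ (1 - α)

/-- The closed interval `I_α^H` with endpoints `1` and `δ_α^H`. -/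
def IH (α : ℝ) : Set ℝ := Set.uIcc 1 (deltaH α)

/-- `κ_α^H(x,y) = k_α^H((k_α^H)⁻¹(x) ∗ (k_α^H)⁻¹(y))`. -/
def kkH (α x y : ℝ) : ℝ := kH α (bconv (kHInv α x) (kHInv α y))

/-- `ĥ_α(x,y) = h_α(h_α⁻¹(x) ∗ h_α⁻¹(y))`. -/
def hhat (α x y : ℝ) : ℝ := binH α (bconv (binHInv α x) (binHInv α y))

/-- Marginal on `Y` of a joint pmf. -/
def margY {X Y : Type*} [Fintype X] (p : X → Y → ℝ) (y : Y) : ℝ := ∑ x, p x y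

/-- A joint pmf: nonnegative entries summing to one. -/
def IsPmf {X Y : Type*} [Fintype X] [Fintype Y] (p : X → Y → ℝ) : Prop :=
  (∀ x y, 0 ≤ p x y) ∧ ∑ x, ∑ y, p x y = 1

/-- Arimoto conditional Rényi entropy `H_α^A(X|Y)`. -/
def condA (α : ℝ) {X Y : Type*} [Fintype X] [Fintype Y] (p : X → Y → ℝ) : ℝ :=
  (α / (1 - α)) * Real.log (∑ y, margY p y * (∑ x, (p x y / margY p y) ^ α) ^ (1/α))

/-- Hayashi conditional Rényi entropy `H_α^H(X|Y)`. -/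
def condH (α : ℝ) {X Y : Type*} [Fintype X] [Fintype Y] (p : X → Y → ℝ) : ℝ :=
  (1 / (1 - α)) * Real.log (∑ y, ∑ x, margY p y * (p x y / margY p y) ^ α)

/-- Jizba–Arimitsu conditional Rényi entropy `H_α^J(X|Y)`. -/
def condJ (α : ℝ) {X Y : Type*} [Fintype X] [Fintype Y] (p : X → Y → ℝ) : ℝ :=
  (1 / (1 - α)) * (Real.log (∑ x, ∑ y, p x y ^ α) - Real.log (∑ y, margY p y ^ α))

/-- Cachin conditional Rényi entropy `H_α^C(X|Y)`. -/
def condC (α : ℝ) {X Y : Type*} [Fintype X] [Fintype Y] (p : X → Y → ℝ) : ℝ :=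
  (1 / (1 - α)) * ∑ y, margY p y * Real.log (∑ x, (p x y / margY p y) ^ α)

/-- `K_α^A(X|Y) = exp(((1-α)/α)·H_α^A(X|Y))`. -/
def KA (α : ℝ) {X Y : Type*} [Fintype X] [Fintype Y] (p : X → Y → ℝ) : ℝ :=
  Real.exp (((1 - α)/α) * condA α p)

/-- `K_α^H(X|Y) = exp((1-α)·H_α^H(X|Y))`. -/
def KH (α : ℝ) {X Y : Type*} [Fintype X] [Fintype Y] (p : X → Y → ℝ) : ℝ :=
  Real.exp ((1 - α) * condH α p)

/-- `K_α^J(X|Y) = exp((1-α)·H_α^J(X|Y))`. -/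
def KJ (α : ℝ) {X Y : Type*} [Fintype X] [Fintype Y] (p : X → Y → ℝ) : ℝ :=
  Real.exp ((1 - α) * condJ α p)

/-- Joint pmf of `(X₁+X₂, (Y₁,Y₂))` for independent pairs `(X₁,Y₁)`, `(X₂,Y₂)`. -/
def combine {Y1 Y2 : Type*} (p1 : Bool → Y1 → ℝ) (p2 : Bool → Y2 → ℝ) :
    Bool → Y1 × Y2 → ℝ :=
  fun z y => ∑ x : Bool, p1 x y.1 * p2 (Bool.xor x z) y.2

/-- `k_∞^A(p) = max{p, 1-p}`. -/
def kInf (p : ℝ) : ℝ := max p (1 - p)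

/-- Binary min-entropy `h_∞(p) = -log max{p, 1-p}`. -/
def binHInf (p : ℝ) : ℝ := - Real.log (max p (1 - p))

/-- Inverse of the restriction of `h_∞` to `[0,1/2]`. -/
def binHInfInv : ℝ → ℝ := Function.invFunOn binHInf (Set.Icc 0 (1/2))

/-- Conditional min-entropy `H_∞(X|Y)` for binary `X`. -/
def condInf {Y : Type*} [Fintype Y] (p : Bool → Y → ℝ) : ℝ :=
  - Real.log (∑ y, margY p y * max (p false y / margY p y) (p true y / margY p y))

/-- Unconditional Rényi entropy of a finitely supported distribution. -/
def renyiEnt (α : ℝ) {X : Type*} [Fintype X] (p : X → ℝ) : ℝ :=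
  (1 / (1 - α)) * Real.log (∑ x, p x ^ α)

/-- Distribution of the mod-2 sum of two independent binary random variables. -/
def sumDist (p1 p2 : Bool → ℝ) : Bool → ℝ := fun z => ∑ x : Bool, p1 x * p2 (Bool.xor x z)

section Aux
variable {α p q x : ℝ}

lemma deltaH_pos : 0 < deltaH α := Real.rpow_pos_of_pos two_pos _

lemma IH_pos (hx : x ∈ IH α) : 0 < x :=
  lt_of_lt_of_le (lt_inf_iff.mpr ⟨one_pos, deltaH_pos⟩) hx.1

lemma IH_convex : Convex ℝ (IH α) := convex_uIcc _ _

lemma kH_symm : kH α (1 - p) = kH α p := by simp [kH, add_comm]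

lemma continuous_kH (hα : 0 < α) : Continuous (kH α) := by
  have h1 : Continuous fun p : ℝ => p ^ α := by
    rw [continuous_iff_continuousAt]
    exact fun x => Real.continuousAt_rpow_const _ _ (Or.inr hα.le)
  exact h1.add (h1.comp (continuous_const.sub continuous_id))

lemma kH_zero (hα : 0 < α) : kH α 0 = 1 := by
  simp [kH, Real.zero_rpow hα.ne', Real.one_rpow]

lemma kH_half : kH α (1/2) = deltaH α := by
  have h : ((1:ℝ)/2) ^ α = 2 ^ (-α) := by
    rw [one_div, ← Real.rpow_neg_one (2:ℝ), ← Real.rpow_mul (by norm_num)]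
    norm_num
  have : kH α (1/2) = 2 * 2 ^ (-α) := by
    rw [kH]; norm_num [h]; ring
  rw [this, deltaH, show (1:ℝ) - α = 1 + (-α) by ring, Real.rpow_add two_pos,
    Real.rpow_one]

end Aux

section Aux2
variable {α p q x : ℝ}

lemma rpow_le_self' (hα : 1 ≤ α) (hx : 0 ≤ x) (hx1 : x ≤ 1) : x ^ α ≤ x := by
  rcases eq_or_lt_of_le hx with h | h
  · rw [← h, Real.zero_rpow (by linarith)]
  · calc x ^ α ≤ x ^ (1:ℝ) := Real.rpow_le_rpow_of_exponent_ge h hx1 hα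
    _ = x := Real.rpow_one x

lemma self_le_rpow' (hα0 : 0 < α) (hα : α ≤ 1) (hx : 0 ≤ x) (hx1 : x ≤ 1) : x ≤ x ^ α := by
  rcases eq_or_lt_of_le hx with h | h
  · rw [← h, Real.zero_rpow hα0.ne']
  · calc x = x ^ (1:ℝ) := (Real.rpow_one x).symm
    _ ≤ x ^ α := Real.rpow_le_rpow_of_exponent_ge h hx1 hα

lemma deltaH_le_one (hα : 1 ≤ α) : deltaH α ≤ 1 :=
  Real.rpow_le_one_of_one_le_of_nonpos one_le_two (by linarith)

lemma one_le_deltaH (hα : α ≤ 1) : 1 ≤ deltaH α := by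
  have := Real.rpow_le_rpow_of_exponent_le one_le_two (show (0:ℝ) ≤ 1 - α by linarith)
  simpa [Real.rpow_zero, deltaH] using this

lemma IH_eq_gt (hα : 1 ≤ α) : IH α = Set.Icc (deltaH α) 1 :=
  Set.uIcc_of_ge (deltaH_le_one hα)

lemma IH_eq_lt (hα : α ≤ 1) : IH α = Set.Icc 1 (deltaH α) :=
  Set.uIcc_of_le (one_le_deltaH hα)

lemma kH_le_one (hα : 1 ≤ α) (hp : p ∈ Set.Icc (0:ℝ) 1) : kH α p ≤ 1 := by
  have h1 := rpow_le_self' hα hp.1 hp.2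
  have h2 := rpow_le_self' hα (by linarith [hp.2] : (0:ℝ) ≤ 1 - p) (by linarith [hp.1])
  unfold kH; linarith

lemma one_le_kH (hα0 : 0 < α) (hα : α ≤ 1) (hp : p ∈ Set.Icc (0:ℝ) 1) : 1 ≤ kH α p := by
  have h1 := self_le_rpow' hα0 hα hp.1 hp.2
  have h2 := self_le_rpow' hα0 hα (by linarith [hp.2] : (0:ℝ) ≤ 1 - p) (by linarith [hp.1])
  unfold kH; linarith

lemma deltaH_le_kH (hα : 1 < α) (hp : p ∈ Set.Icc (0:ℝ) 1) : deltaH α ≤ kH α p := by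
  have hc := (strictConvexOn_rpow hα).convexOn.2 (Set.mem_Ici.mpr hp.1)
    (Set.mem_Ici.mpr (by linarith [hp.2] : (0:ℝ) ≤ 1 - p))
    (by norm_num : (0:ℝ) ≤ 1/2) (by norm_num : (0:ℝ) ≤ 1/2) (by norm_num)
  simp only [smul_eq_mul] at hc
  have he : (1/2 : ℝ) * p + 1/2 * (1 - p) = 1/2 := by ring
  rw [he] at hc
  have hh : ((1:ℝ)/2) ^ α = deltaH α / 2 := by
    have := @kH_half α
    unfold kH at this
    have h2 : ((1:ℝ) - 1/2) = 1/2 := by norm_num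
    rw [h2] at this
    linarith
  rw [hh] at hc; unfold kH; linarith

lemma kH_le_deltaH (hα0 : 0 < α) (hα : α < 1) (hp : p ∈ Set.Icc (0:ℝ) 1) :
    kH α p ≤ deltaH α := by
  have hc := (Real.strictConcaveOn_rpow hα0 hα).concaveOn.2 (Set.mem_Ici.mpr hp.1)
    (Set.mem_Ici.mpr (by linarith [hp.2] : (0:ℝ) ≤ 1 - p))
    (by norm_num : (0:ℝ) ≤ 1/2) (by norm_num : (0:ℝ) ≤ 1/2) (by norm_num)
  simp only [smul_eq_mul] at hc
  have he : (1/2 : ℝ) * p + 1/2 * (1 - p) = 1/2 := by ring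
  rw [he] at hc
  have hh : ((1:ℝ)/2) ^ α = deltaH α / 2 := by
    have := @kH_half α
    unfold kH at this
    have h2 : ((1:ℝ) - 1/2) = 1/2 := by norm_num
    rw [h2] at this
    linarith
  rw [hh] at hc; unfold kH; linarith

lemma kH_mem_IH (hα0 : 0 < α) (hα1 : α ≠ 1) (hp : p ∈ Set.Icc (0:ℝ) 1) :
    kH α p ∈ IH α := by
  rcases lt_or_gt_of_ne hα1 with h | h
  · rw [IH_eq_lt h.le]
    exact ⟨one_le_kH hα0 h.le hp, kH_le_deltaH hα0 h hp⟩
  · rw [IH_eq_gt h.le]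
    exact ⟨deltaH_le_kH h hp, kH_le_one h.le hp⟩

end Aux2

section Aux3
variable {α p q x y : ℝ}

lemma kH_hasDerivAt (hp : p ∈ Set.Ioo (0:ℝ) (1/2)) :
    HasDerivAt (kH α) (1 * α * p ^ (α - 1) + -1 * α * (1 - p) ^ (α - 1)) p := by
  have h1 : HasDerivAt (fun x : ℝ => x ^ α) (1 * α * p ^ (α - 1)) p :=
    (hasDerivAt_id p).rpow_const (Or.inl hp.1.ne')
  have h2 : HasDerivAt (fun x : ℝ => (1 - x) ^ α) (-1 * α * (1 - p) ^ (α - 1)) p :=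
    ((hasDerivAt_id p).const_sub 1).rpow_const (Or.inl (by linarith [hp.2] : (1:ℝ) - p ≠ 0))
  exact h1.add h2

lemma kH_strictAntiOn (hα : 1 < α) : StrictAntiOn (kH α) (Set.Icc 0 (1/2)) := by
  apply strictAntiOn_of_deriv_neg (convex_Icc _ _)
    ((continuous_kH (by linarith)).continuousOn)
  intro p hp
  rw [interior_Icc] at hp
  rw [(kH_hasDerivAt hp).deriv]
  have h : p ^ (α - 1) < (1 - p) ^ (α - 1) :=
    Real.rpow_lt_rpow hp.1.le (by linarith [hp.2]) (by linarith)
  nlinarith [h, (by linarith : (0:ℝ) < α)]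

lemma kH_strictMonoOn (hα0 : 0 < α) (hα : α < 1) : StrictMonoOn (kH α) (Set.Icc 0 (1/2)) := by
  apply strictMonoOn_of_deriv_pos (convex_Icc _ _) ((continuous_kH hα0).continuousOn)
  intro p hp
  rw [interior_Icc] at hp
  rw [(kH_hasDerivAt hp).deriv]
  have h : (1 - p) ^ (α - 1) < p ^ (α - 1) :=
    Real.rpow_lt_rpow_of_neg hp.1 (by linarith [hp.2]) (by linarith)
  nlinarith [h, hα0]

lemma kH_injOn (hα0 : 0 < α) (hα1 : α ≠ 1) : Set.InjOn (kH α) (Set.Icc 0 (1/2)) := by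
  rcases lt_or_gt_of_ne hα1 with h | h
  · exact (kH_strictMonoOn hα0 h).injOn
  · exact (kH_strictAntiOn h).injOn

lemma IH_subset_image (hα0 : 0 < α) : IH α ⊆ kH α '' Set.Icc 0 (1/2) := by
  have hc : ContinuousOn (kH α) (Set.uIcc 0 (1/2)) := (continuous_kH hα0).continuousOn
  have h := intermediate_value_uIcc hc
  rw [kH_zero hα0, kH_half, Set.uIcc_of_le (by norm_num : (0:ℝ) ≤ 1/2)] at h
  exact h

lemma kHInv_mem (hα0 : 0 < α) (hx : x ∈ IH α) : kHInv α x ∈ Set.Icc (0:ℝ) (1/2) := by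
  obtain ⟨a, ha, hfa⟩ := IH_subset_image hα0 hx
  exact Function.invFunOn_mem ⟨a, ha, hfa⟩

lemma kH_kHInv (hα0 : 0 < α) (hx : x ∈ IH α) : kH α (kHInv α x) = x := by
  obtain ⟨a, ha, hfa⟩ := IH_subset_image hα0 hx
  exact Function.invFunOn_eq ⟨a, ha, hfa⟩

lemma kHInv_kH (hα0 : 0 < α) (hα1 : α ≠ 1) (hp : p ∈ Set.Icc (0:ℝ) (1/2)) :
    kHInv α (kH α p) = p :=
  (kH_injOn hα0 hα1).leftInvOn_invFunOn hp

lemma bconv_one_sub_left (a b : ℝ) : bconv (1 - a) b = 1 - bconv a b := by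
  unfold bconv; ring

lemma bconv_one_sub_right (a b : ℝ) : bconv a (1 - b) = 1 - bconv a b := by
  unfold bconv; ring

lemma bconv_mem (ha : p ∈ Set.Icc (0:ℝ) 1) (hb : q ∈ Set.Icc (0:ℝ) 1) :
    bconv p q ∈ Set.Icc (0:ℝ) 1 := by
  obtain ⟨ha0, ha1⟩ := ha; obtain ⟨hb0, hb1⟩ := hb
  constructor
  · have := mul_nonneg ha0 (by linarith : (0:ℝ) ≤ 1 - q)
    have := mul_nonneg (by linarith : (0:ℝ) ≤ 1 - p) hb0
    unfold bconv; linarith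
  · have := mul_nonneg ha0 hb0
    have := mul_nonneg (by linarith : (0:ℝ) ≤ 1 - p) (by linarith : (0:ℝ) ≤ 1 - q)
    unfold bconv; nlinarith

/-- key: `kkH` applied to `kH` values recovers `kH` of the binary convolution. -/
lemma kkH_kH_kH (hα0 : 0 < α) (hα1 : α ≠ 1) (ha : p ∈ Set.Icc (0:ℝ) 1)
    (hb : q ∈ Set.Icc (0:ℝ) 1) : kkH α (kH α p) (kH α q) = kH α (bconv p q) := by
  have key : ∀ r : ℝ, r ∈ Set.Icc (0:ℝ) 1 →
      kHInv α (kH α r) = r ∨ kHInv α (kH α r) = 1 - r := by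
    intro r hr
    rcases le_or_gt r (1/2) with h | h
    · exact Or.inl (kHInv_kH hα0 hα1 ⟨hr.1, h⟩)
    · right
      rw [← kH_symm, kHInv_kH hα0 hα1 ⟨by linarith [hr.2], by linarith⟩]
  unfold kkH
  rcases key p ha with h1 | h1 <;> rcases key q hb with h2 | h2 <;>
    rw [h1, h2] <;>
    simp [bconv_one_sub_left, bconv_one_sub_right, kH_symm, sub_sub_cancel]

end Aux3

section Aux4
variable {α p q x y : ℝ}

lemma binH_eq (p : ℝ) : binH α p = (1 / (1 - α)) * Real.log (kH α p) := rfl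

lemma binH_injOn (hα0 : 0 < α) (hα1 : α ≠ 1) :
    Set.InjOn (binH α) (Set.Icc 0 (1/2)) := by
  intro a ha b hb h
  have hne : (1:ℝ) / (1 - α) ≠ 0 := one_div_ne_zero (sub_ne_zero.mpr (Ne.symm hα1))
  rw [binH_eq, binH_eq] at h
  have hlog : Real.log (kH α a) = Real.log (kH α b) := mul_left_cancel₀ hne h
  have hka : (0:ℝ) < kH α a := IH_pos (kH_mem_IH hα0 hα1 ⟨ha.1, by linarith [ha.2]⟩)
  have hkb : (0:ℝ) < kH α b := IH_pos (kH_mem_IH hα0 hα1 ⟨hb.1, by linarith [hb.2]⟩)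
  have : kH α a = kH α b := by
    rw [← Real.exp_log hka, ← Real.exp_log hkb, hlog]
  exact kH_injOn hα0 hα1 ha hb this

variable {Y : Type*} [Fintype Y]

/-- The Hayashi sum written through `kH`. -/
def Sval (α : ℝ) (p : Bool → Y → ℝ) : ℝ :=
  ∑ y, margY p y * kH α (p true y / margY p y)

lemma margY_bool (p : Bool → Y → ℝ) (y : Y) : margY p y = p true y + p false y := by
  simp [margY, Fintype.sum_bool]

lemma condH_eq_Sval (hα0 : 0 < α) (p : Bool → Y → ℝ) :
    condH α p = (1 / (1 - α)) * Real.log (Sval α p) := by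
  unfold condH Sval
  congr 1
  congr 1
  refine Finset.sum_congr rfl fun y _ => ?_
  rcases eq_or_ne (margY p y) 0 with hm | hm
  · simp [hm, Fintype.sum_bool]
  · have hf : p false y / margY p y = 1 - p true y / margY p y := by
      rw [margY_bool] at hm ⊢
      field_simp
      ring
    rw [Fintype.sum_bool, kH, hf]
    ring

lemma margY_nonneg {p : Bool → Y → ℝ} (hp : ∀ x y, 0 ≤ p x y) (y : Y) :
    0 ≤ margY p y := Finset.sum_nonneg fun x _ => hp x y

lemma sum_margY {p : Bool → Y → ℝ} (hp : IsPmf p) : ∑ y, margY p y = 1 := by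
  rw [← hp.2, Finset.sum_comm]
  rfl

lemma cond_mem {p : Bool → Y → ℝ} (hp : ∀ x y, 0 ≤ p x y) (y : Y) :
    p true y / margY p y ∈ Set.Icc (0:ℝ) 1 := by
  rcases eq_or_ne (margY p y) 0 with hm | hm
  · simp [hm]
  · have hpos : 0 < margY p y := lt_of_le_of_ne (margY_nonneg hp y) (Ne.symm hm)
    refine ⟨div_nonneg (hp true y) hpos.le, (div_le_one hpos).mpr ?_⟩
    rw [margY_bool]
    linarith [hp false y]

lemma Sval_mem_IH (hα0 : 0 < α) (hα1 : α ≠ 1) {p : Bool → Y → ℝ} (hp : IsPmf p) :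
    Sval α p ∈ IH α := by
  have := IH_convex.sum_mem (t := Finset.univ) (w := fun y => margY p y)
    (z := fun y => kH α (p true y / margY p y))
    (fun y _ => margY_nonneg hp.1 y) (sum_margY hp)
    (fun y _ => kH_mem_IH hα0 hα1 (cond_mem hp.1 y))
  simpa [smul_eq_mul, Sval] using this

end Aux4

section Aux5
variable {α : ℝ} {Y1 Y2 : Type*} [Fintype Y1] [Fintype Y2]
variable {p1 : Bool → Y1 → ℝ} {p2 : Bool → Y2 → ℝ}

lemma margY_combine (y : Y1 × Y2) :
    margY (combine p1 p2) y = margY p1 y.1 * margY p2 y.2 := by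
  simp only [margY, combine, Fintype.sum_bool]
  simp [Fintype.sum_bool]
  ring

lemma combine_true (y : Y1 × Y2) :
    combine p1 p2 true y = p1 false y.1 * p2 true y.2 + p1 true y.1 * p2 false y.2 := by
  simp [combine, Fintype.sum_bool]
  ring

lemma combine_cond (hm1 : margY p1 y.1 ≠ 0) (hm2 : margY p2 y.2 ≠ 0) :
    combine p1 p2 true y / margY (combine p1 p2) y =
      bconv (p1 true y.1 / margY p1 y.1) (p2 true y.2 / margY p2 y.2) := by
  rw [margY_combine, combine_true, bconv]
  simp only [margY_bool] at hm1 hm2 ⊢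
  field_simp
  ring

/-- `Sval` of the combined pmf written as a double sum over `bconv`s. -/
lemma Sval_combine :
    Sval α (combine p1 p2) = ∑ y1, ∑ y2, (margY p1 y1 * margY p2 y2) *
      kH α (bconv (p1 true y1 / margY p1 y1) (p2 true y2 / margY p2 y2)) := by
  rw [Sval, Fintype.sum_prod_type]
  refine Finset.sum_congr rfl fun y1 _ => Finset.sum_congr rfl fun y2 _ => ?_
  rcases eq_or_ne (margY p1 y1) 0 with hm1 | hm1
  · rw [margY_combine]; simp [hm1]
  rcases eq_or_ne (margY p2 y2) 0 with hm2 | hm2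
  · rw [margY_combine]; simp [hm2]
  rw [combine_cond (y := (y1, y2)) hm1 hm2, margY_combine]

lemma Sval_combine_mem_IH (hα0 : 0 < α) (hα1 : α ≠ 1)
    (hp1 : IsPmf p1) (hp2 : IsPmf p2) : Sval α (combine p1 p2) ∈ IH α := by
  rw [Sval_combine]
  have hw : ∑ y : Y1 × Y2, margY p1 y.1 * margY p2 y.2 = 1 := by
    rw [Fintype.sum_prod_type]
    simp only [← Finset.mul_sum, sum_margY hp2, mul_one]
    exact sum_margY hp1
  have := IH_convex.sum_mem (t := (Finset.univ : Finset (Y1 × Y2)))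
    (w := fun y => margY p1 y.1 * margY p2 y.2)
    (z := fun y => kH α (bconv (p1 true y.1 / margY p1 y.1) (p2 true y.2 / margY p2 y.2)))
    (fun y _ => mul_nonneg (margY_nonneg hp1.1 _) (margY_nonneg hp2.1 _)) hw
    (fun y _ => kH_mem_IH hα0 hα1 (bconv_mem (cond_mem hp1.1 _) (cond_mem hp2.1 _)))
  simp only [smul_eq_mul] at this
  rw [Fintype.sum_prod_type] at this
  exact this

/-- The convex-case Jensen chain. -/
lemma jensen_convex (hα0 : 0 < α) (hα1 : α ≠ 1)
    (hp1 : IsPmf p1) (hp2 : IsPmf p2)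
    (h1 : ∀ y ∈ IH α, ConvexOn ℝ (IH α) fun x => kkH α x y)
    (h2 : ∀ x ∈ IH α, ConvexOn ℝ (IH α) fun y => kkH α x y) :
    kkH α (Sval α p1) (Sval α p2) ≤ Sval α (combine p1 p2) := by
  set a1 : Y1 → ℝ := fun y => p1 true y / margY p1 y with ha1
  set a2 : Y2 → ℝ := fun y => p2 true y / margY p2 y with ha2
  set u1 : Y1 → ℝ := fun y => kH α (a1 y) with hu1
  set u2 : Y2 → ℝ := fun y => kH α (a2 y) with hu2
  have hu1m : ∀ y, u1 y ∈ IH α := fun y => kH_mem_IH hα0 hα1 (cond_mem hp1.1 y)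
  have hu2m : ∀ y, u2 y ∈ IH α := fun y => kH_mem_IH hα0 hα1 (cond_mem hp2.1 y)
  have hS1 : Sval α p1 = ∑ y, margY p1 y • u1 y := by
    simp [Sval, smul_eq_mul]; rfl
  have hS2 : Sval α p2 = ∑ y, margY p2 y • u2 y := by
    simp [Sval, smul_eq_mul]; rfl
  have hS1m : Sval α p1 ∈ IH α := Sval_mem_IH hα0 hα1 hp1
  have hS2m : Sval α p2 ∈ IH α := Sval_mem_IH hα0 hα1 hp2
  have hkk : ∀ y1 y2, kH α (bconv (a1 y1) (a2 y2)) = kkH α (u1 y1) (u2 y2) := fun y1 y2 =>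
    (kkH_kH_kH hα0 hα1 (cond_mem hp1.1 y1) (cond_mem hp2.1 y2)).symm
  rw [Sval_combine]
  -- step 1: inner Jensen in the second variable
  have step1 : ∀ y1, margY p1 y1 * kkH α (u1 y1) (Sval α p2) ≤
      ∑ y2, (margY p1 y1 * margY p2 y2) * kH α (bconv (a1 y1) (a2 y2)) := by
    intro y1
    have hj := (h2 (u1 y1) (hu1m y1)).map_sum_le (t := Finset.univ)
      (w := fun y => margY p2 y) (p := u2)
      (fun y _ => margY_nonneg hp2.1 y) (sum_margY hp2) (fun y _ => hu2m y)
    rw [← hS2] at hj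
    have := mul_le_mul_of_nonneg_left hj (margY_nonneg hp1.1 y1)
    calc margY p1 y1 * kkH α (u1 y1) (Sval α p2)
        ≤ margY p1 y1 * ∑ y2, margY p2 y2 • kkH α (u1 y1) (u2 y2) := this
      _ = ∑ y2, (margY p1 y1 * margY p2 y2) * kH α (bconv (a1 y1) (a2 y2)) := by
          rw [Finset.mul_sum]
          exact Finset.sum_congr rfl fun y2 _ => by rw [smul_eq_mul, hkk]; ring
  -- step 2: outer Jensen in the first variable
  have hj1 := (h1 (Sval α p2) hS2m).map_sum_le (t := Finset.univ)
    (w := fun y => margY p1 y) (p := u1)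
    (fun y _ => margY_nonneg hp1.1 y) (sum_margY hp1) (fun y _ => hu1m y)
  rw [← hS1] at hj1
  calc kkH α (Sval α p1) (Sval α p2)
      ≤ ∑ y1, margY p1 y1 • kkH α (u1 y1) (Sval α p2) := hj1
    _ ≤ ∑ y1, ∑ y2, (margY p1 y1 * margY p2 y2) * kH α (bconv (a1 y1) (a2 y2)) := by
        refine Finset.sum_le_sum fun y1 _ => ?_
        rw [smul_eq_mul]
        exact step1 y1

/-- The concave-case Jensen chain. -/
lemma jensen_concave (hα0 : 0 < α) (hα1 : α ≠ 1)
    (hp1 : IsPmf p1) (hp2 : IsPmf p2)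
    (h1 : ∀ y ∈ IH α, ConcaveOn ℝ (IH α) fun x => kkH α x y)
    (h2 : ∀ x ∈ IH α, ConcaveOn ℝ (IH α) fun y => kkH α x y) :
    Sval α (combine p1 p2) ≤ kkH α (Sval α p1) (Sval α p2) := by
  set a1 : Y1 → ℝ := fun y => p1 true y / margY p1 y with ha1
  set a2 : Y2 → ℝ := fun y => p2 true y / margY p2 y with ha2
  set u1 : Y1 → ℝ := fun y => kH α (a1 y) with hu1
  set u2 : Y2 → ℝ := fun y => kH α (a2 y) with hu2
  have hu1m : ∀ y, u1 y ∈ IH α := fun y => kH_mem_IH hα0 hα1 (cond_mem hp1.1 y)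
  have hu2m : ∀ y, u2 y ∈ IH α := fun y => kH_mem_IH hα0 hα1 (cond_mem hp2.1 y)
  have hS1 : Sval α p1 = ∑ y, margY p1 y • u1 y := by
    simp [Sval, smul_eq_mul]; rfl
  have hS2 : Sval α p2 = ∑ y, margY p2 y • u2 y := by
    simp [Sval, smul_eq_mul]; rfl
  have hS2m : Sval α p2 ∈ IH α := Sval_mem_IH hα0 hα1 hp2
  have hkk : ∀ y1 y2, kH α (bconv (a1 y1) (a2 y2)) = kkH α (u1 y1) (u2 y2) := fun y1 y2 =>
    (kkH_kH_kH hα0 hα1 (cond_mem hp1.1 y1) (cond_mem hp2.1 y2)).symm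
  rw [Sval_combine]
  have step1 : ∀ y1, (∑ y2, (margY p1 y1 * margY p2 y2) * kH α (bconv (a1 y1) (a2 y2))) ≤
      margY p1 y1 * kkH α (u1 y1) (Sval α p2) := by
    intro y1
    have hj := (h2 (u1 y1) (hu1m y1)).le_map_sum (t := Finset.univ)
      (w := fun y => margY p2 y) (p := u2)
      (fun y _ => margY_nonneg hp2.1 y) (sum_margY hp2) (fun y _ => hu2m y)
    rw [← hS2] at hj
    have := mul_le_mul_of_nonneg_left hj (margY_nonneg hp1.1 y1)
    calc (∑ y2, (margY p1 y1 * margY p2 y2) * kH α (bconv (a1 y1) (a2 y2)))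
        = margY p1 y1 * ∑ y2, margY p2 y2 • kkH α (u1 y1) (u2 y2) := by
          rw [Finset.mul_sum]
          exact Finset.sum_congr rfl fun y2 _ => by rw [smul_eq_mul, hkk]; ring
      _ ≤ margY p1 y1 * kkH α (u1 y1) (Sval α p2) := this
  have hj1 := (h1 (Sval α p2) hS2m).le_map_sum (t := Finset.univ)
    (w := fun y => margY p1 y) (p := u1)
    (fun y _ => margY_nonneg hp1.1 y) (sum_margY hp1) (fun y _ => hu1m y)
  rw [← hS1] at hj1
  calc (∑ y1, ∑ y2, (margY p1 y1 * margY p2 y2) * kH α (bconv (a1 y1) (a2 y2)))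
      ≤ ∑ y1, margY p1 y1 • kkH α (u1 y1) (Sval α p2) := by
        refine Finset.sum_le_sum fun y1 _ => ?_
        rw [smul_eq_mul]
        exact step1 y1
    _ ≤ kkH α (Sval α p1) (Sval α p2) := hj1

end Aux5

section Final
variable {α : ℝ}

lemma binHInv_condH (hα0 : 0 < α) (hα1 : α ≠ 1) {Y : Type*} [Fintype Y]
    {p : Bool → Y → ℝ} (hp : IsPmf p) :
    binHInv α (condH α p) = kHInv α (Sval α p) := by
  have hSm : Sval α p ∈ IH α := Sval_mem_IH hα0 hα1 hp
  have hq : kHInv α (Sval α p) ∈ Set.Icc (0:ℝ) (1/2) := kHInv_mem hα0 hSm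
  have hkq : kH α (kHInv α (Sval α p)) = Sval α p := kH_kHInv hα0 hSm
  have hc : condH α p = binH α (kHInv α (Sval α p)) := by
    rw [condH_eq_Sval hα0, binH_eq, hkq]
  rw [hc]
  exact binH_injOn hα0 hα1 (Function.invFunOn_apply_mem hq) hq
    (Function.invFunOn_apply_eq hq)

lemma rhs_eq (hα0 : 0 < α) (hα1 : α ≠ 1) {Y1 Y2 : Type*} [Fintype Y1] [Fintype Y2]
    {p1 : Bool → Y1 → ℝ} {p2 : Bool → Y2 → ℝ} (hp1 : IsPmf p1) (hp2 : IsPmf p2) :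
    binH α (bconv (binHInv α (condH α p1)) (binHInv α (condH α p2))) =
      (1 / (1 - α)) * Real.log (kkH α (Sval α p1) (Sval α p2)) := by
  rw [binHInv_condH hα0 hα1 hp1, binHInv_condH hα0 hα1 hp2, binH_eq]
  rfl

lemma kkH_Sval_pos (hα0 : 0 < α) (hα1 : α ≠ 1) {Y1 Y2 : Type*} [Fintype Y1] [Fintype Y2]
    {p1 : Bool → Y1 → ℝ} {p2 : Bool → Y2 → ℝ} (hp1 : IsPmf p1) (hp2 : IsPmf p2) :
    0 < kkH α (Sval α p1) (Sval α p2) := by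
  have h1 := kHInv_mem hα0 (Sval_mem_IH hα0 hα1 hp1)
  have h2 := kHInv_mem hα0 (Sval_mem_IH hα0 hα1 hp2)
  exact IH_pos (kH_mem_IH hα0 hα1 (bconv_mem ⟨h1.1, by linarith [h1.2]⟩
    ⟨h2.1, by linarith [h2.2]⟩))


/-- BSC-bound for the Hayashi conditional Rényi entropy. -/
theorem stmt_6 (α : ℝ) (hα : 0 < α) (hα1 : α ≠ 1)
    {Y1 Y2 : Type*} [Fintype Y1] [Fintype Y2]
    (p1 : Bool → Y1 → ℝ) (p2 : Bool → Y2 → ℝ)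
    (hp1 : IsPmf p1) (hp2 : IsPmf p2) :
    (((∀ y ∈ IH α, ConvexOn ℝ (IH α) (fun x => kkH α x y)) ∧
      (∀ x ∈ IH α, ConvexOn ℝ (IH α) (fun y => kkH α x y))) →
      (1 < α → condH α (combine p1 p2) ≤
          binH α (bconv (binHInv α (condH α p1)) (binHInv α (condH α p2)))) ∧
      (α < 1 → binH α (bconv (binHInv α (condH α p1)) (binHInv α (condH α p2))) ≤
          condH α (combine p1 p2))) ∧
    (((∀ y ∈ IH α, ConcaveOn ℝ (IH α) (fun x => kkH α x y)) ∧
      (∀ x ∈ IH α, ConcaveOn ℝ (IH α) (fun y => kkH α x y))) →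
      (1 < α → binH α (bconv (binHInv α (condH α p1)) (binHInv α (condH α p2))) ≤
          condH α (combine p1 p2)) ∧
      (α < 1 → condH α (combine p1 p2) ≤
          binH α (bconv (binHInv α (condH α p1)) (binHInv α (condH α p2))))) := by
  have hKpos : 0 < kkH α (Sval α p1) (Sval α p2) := kkH_Sval_pos hα hα1 hp1 hp2
  have hSc : 0 < Sval α (combine p1 p2) :=
    IH_pos (Sval_combine_mem_IH hα hα1 hp1 hp2)
  have hRHS := rhs_eq hα hα1 (p1 := p1) (p2 := p2) hp1 hp2
  have hLHS : condH α (combine p1 p2) =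
      (1 / (1 - α)) * Real.log (Sval α (combine p1 p2)) := condH_eq_Sval hα _
  constructor
  · rintro ⟨h1, h2⟩
    have hj := jensen_convex hα hα1 hp1 hp2 h1 h2
    have hlog : Real.log (kkH α (Sval α p1) (Sval α p2)) ≤
        Real.log (Sval α (combine p1 p2)) := Real.log_le_log hKpos hj
    constructor
    · intro hgt
      rw [hLHS, hRHS]
      have hc : (1:ℝ) / (1 - α) ≤ 0 := by
        apply div_nonpos_of_nonneg_of_nonpos <;> linarith
      exact mul_le_mul_of_nonpos_left hlog hc
    · intro hlt
      rw [hLHS, hRHS]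
      have hc : (0:ℝ) ≤ 1 / (1 - α) := le_of_lt (div_pos one_pos (by linarith))
      exact mul_le_mul_of_nonneg_left hlog hc
  · rintro ⟨h1, h2⟩
    have hj := jensen_concave hα hα1 hp1 hp2 h1 h2
    have hlog : Real.log (Sval α (combine p1 p2)) ≤
        Real.log (kkH α (Sval α p1) (Sval α p2)) := Real.log_le_log hSc hj
    constructor
    · intro hgt
      rw [hLHS, hRHS]
      have hc : (1:ℝ) / (1 - α) ≤ 0 := by
        apply div_nonpos_of_nonneg_of_nonpos <;> linarith
      exact mul_le_mul_of_nonpos_left hlog hc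
    · intro hlt
      rw [hLHS, hRHS]
      have hc : (0:ℝ) ≤ 1 / (1 - α) := le_of_lt (div_pos one_pos (by linarith))
      exact mul_le_mul_of_nonneg_left hlog hc
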